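/- In ℝ^N = ℝ^m × ℝ^k, let α > 0, ρ_α(z,t) = (|z|^(2(α+1)) + 4(α+1)²|t|²)^(1/(2(α+1))), Z_α = Σ z_i ∂_{z_i} + (α+1)Σ t_j ∂_{t_j}, and for u ∈ C¹ define ⟨∇_α u, ∇_α ρ_α⟩ = ⟨∇_z u, ∇_z ρ_α⟩ + (|z|^(2α)/4)⟨∇_t u, ∇_t ρ_α⟩. Then for (z,t) ≠ (0,0), ⟨∇_α u, ∇_α ρ_α⟩ = (Z_α u / ρ_α) · (|z|^(2α)/ρ_α^(2α)). -/

import Mathlib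

open Real RealInnerProductSpace

lemma aux_hasGradientAt {F : Type*} [NormedAddCommGroup F] [InnerProductSpace ℝ F]
    [CompleteSpace F] {f : F → ℝ} {c : ℝ} {v x : F}
    (h : HasFDerivAt f (c • (innerSL ℝ v)) x) : HasGradientAt f (c • v) x := by
  rw [hasGradientAt_iff_hasFDerivAt]
  convert h using 1
  · rfl
  ext y
  simp [InnerProductSpace.toDual_apply_apply, inner_smul_left]

/-- Gradient of `x ↦ ‖x‖ ^ p` (rpow) for `1 ≤ p/... ` via composition. -/
lemma aux_normsq_fderiv {F : Type*} [NormedAddCommGroup F] [InnerProductSpace ℝ F]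
    (β : ℝ) (hβ : 1 ≤ β) (x : F) :
    HasFDerivAt (fun y : F => (‖y‖ ^ (2 : ℕ) : ℝ) ^ β)
      ((2 * (β * (‖x‖ ^ (2:ℕ)) ^ (β - 1))) • (innerSL ℝ x)) x := by
  have h1 : HasFDerivAt (fun y : F => ‖y‖ ^ (2:ℕ)) (2 • (innerSL ℝ x)) x :=
    (hasStrictFDerivAt_norm_sq x).hasFDerivAt
  have h2 : HasDerivAt (fun s : ℝ => s ^ β) (β * (‖x‖ ^ (2:ℕ)) ^ (β - 1)) (‖x‖ ^ (2:ℕ)) :=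
    Real.hasDerivAt_rpow_const (Or.inr hβ)
  have := h2.comp_hasFDerivAt x h1
  convert this using 1
  · rfl
  · rfl
  · rfl
  ext y
  simp only [ContinuousLinearMap.smul_apply, smul_eq_mul, nsmul_eq_mul, Nat.cast_ofNat]
  ring

/-- The α-gradient of any `C¹` function paired with that of the pseudo-gauge:
`⟨∇_α u, ∇_α ρ_α⟩ = (Z_α u / ρ_α) ψ_α`. -/
theorem stmt_7 (m k : ℕ) (α : ℝ) (hα : 0 < α)
    (ρ : EuclideanSpace ℝ (Fin m) → EuclideanSpace ℝ (Fin k) → ℝ)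
    (hρ : ρ = fun z t => (‖z‖ ^ (2 * (α + 1)) + 4 * (α + 1) ^ 2 * ‖t‖ ^ 2) ^ (1 / (2 * (α + 1))))
    (u : EuclideanSpace ℝ (Fin m) → EuclideanSpace ℝ (Fin k) → ℝ)
    (hu : ContDiff ℝ 1 (fun p : EuclideanSpace ℝ (Fin m) × EuclideanSpace ℝ (Fin k) => u p.1 p.2)) :
    ∀ (z : EuclideanSpace ℝ (Fin m)) (t : EuclideanSpace ℝ (Fin k)), (z, t) ≠ (0, 0) →
      ⟪gradient (fun z' => u z' t) z, gradient (fun z' => ρ z' t) z⟫ +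
          ‖z‖ ^ (2 * α) / 4 *
            ⟪gradient (fun t' => u z t') t, gradient (fun t' => ρ z t') t⟫ =
        ((⟪z, gradient (fun z' => u z' t) z⟫ +
            (α + 1) * ⟪t, gradient (fun t' => u z t') t⟫) / ρ z t) *
          (‖z‖ ^ (2 * α) / ρ z t ^ (2 * α)) := by
  intro z t hzt
  have hα1 : (0:ℝ) < α + 1 := by linarith
  have h2α1 : (0:ℝ) < 2 * (α + 1) := by linarith
  set A : ℝ := ‖z‖ ^ (2 * (α + 1)) with hA
  set B : ℝ := 4 * (α + 1) ^ 2 * ‖t‖ ^ 2 with hB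
  have hAnn : 0 ≤ A := Real.rpow_nonneg (norm_nonneg z) _
  have hBnn : 0 ≤ B := by positivity
  have hF : 0 < A + B := by
    rcases (by simpa [Prod.ext_iff] using hzt : ¬ (z = 0 ∧ t = 0)) with h
    by_cases hz : z = 0
    · have ht : t ≠ 0 := fun ht => h ⟨hz, ht⟩
      have : 0 < B := by
        have : 0 < ‖t‖ := norm_pos_iff.mpr ht
        positivity
      linarith
    · have : 0 < A := Real.rpow_pos_of_pos (norm_pos_iff.mpr hz) _
      linarith
  -- rewrite A as (‖z‖^2)^(α+1)
  have hAeq : ∀ w : EuclideanSpace ℝ (Fin m),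
      (‖w‖ ^ (2:ℕ) : ℝ) ^ (α + 1) = ‖w‖ ^ (2 * (α + 1)) := by
    intro w
    rw [← Real.rpow_natCast ‖w‖ 2, ← Real.rpow_mul (norm_nonneg w)]
    norm_num
  -- fderiv of z ↦ A(z)
  have hAd : HasFDerivAt (fun w : EuclideanSpace ℝ (Fin m) => ‖w‖ ^ (2 * (α + 1)))
      ((2 * ((α + 1) * (‖z‖ ^ (2:ℕ)) ^ α)) • (innerSL ℝ z)) z := by
    have := aux_normsq_fderiv (α + 1) (by linarith) z
    simp only [add_sub_cancel_right] at this
    convert this using 2 with w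
    · rfl
    exact (hAeq _).symm
  have hzsq : ((‖z‖ ^ (2:ℕ) : ℝ)) ^ α = ‖z‖ ^ (2 * α) := by
    rw [← Real.rpow_natCast ‖z‖ 2, ← Real.rpow_mul (norm_nonneg z)]
    norm_num
  -- derivative of the outer rpow
  set q : ℝ := 1 / (2 * (α + 1)) with hq
  have houter : HasDerivAt (fun s : ℝ => s ^ q) (q * (A + B) ^ (q - 1)) (A + B) :=
    Real.hasDerivAt_rpow_const (Or.inl (ne_of_gt hF))
  -- gradient in z
  have hgz : HasGradientAt (fun z' => ρ z' t)
      ((‖z‖ ^ (2 * α) * (A + B) ^ (q - 1)) • z) z := by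
    apply aux_hasGradientAt
    have hginner : HasFDerivAt (fun w : EuclideanSpace ℝ (Fin m) => ‖w‖ ^ (2 * (α + 1)) + B)
        ((2 * ((α + 1) * (‖z‖ ^ (2:ℕ)) ^ α)) • (innerSL ℝ z)) z := hAd.add_const B
    have := houter.comp_hasFDerivAt z hginner
    rw [hρ]
    convert this using 1
    · rfl
    · rfl
    · rfl
    rw [smul_smul]
    congr 1
    rw [hzsq, hq]
    have h0 : (α + 1) ≠ 0 := hα1.ne'
    field_simp
  -- gradient in t
  have hgt : HasGradientAt (fun t' => ρ z t')
      ((4 * (α + 1) * (A + B) ^ (q - 1)) • t) t := by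
    apply aux_hasGradientAt
    have hnt : HasFDerivAt (fun s : EuclideanSpace ℝ (Fin k) => ‖s‖ ^ (2:ℕ))
        (2 • (innerSL ℝ t)) t := (hasStrictFDerivAt_norm_sq t).hasFDerivAt
    have hginner : HasFDerivAt
        (fun s : EuclideanSpace ℝ (Fin k) => A + 4 * (α + 1) ^ 2 * ‖s‖ ^ (2:ℕ))
        ((4 * (α + 1) ^ 2 * 2) • (innerSL ℝ t)) t := by
      have := ((hnt.const_smul (4 * (α + 1) ^ 2)).const_add A)
      convert this using 1
      · rfl
      · rfl
      · rfl
      · rfl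
      · rfl
      ext y
      simp only [ContinuousLinearMap.smul_apply, smul_eq_mul, nsmul_eq_mul, Nat.cast_ofNat]
      ring
    have := houter.comp_hasFDerivAt t hginner
    rw [hρ]
    convert this using 1
    · rfl
    · rfl
    · rfl
    rw [smul_smul]
    congr 1
    rw [hq]
    have h0 : (α + 1) ≠ 0 := hα1.ne'
    field_simp
  rw [hgz.gradient, hgt.gradient]
  -- now pure algebra
  set X := gradient (fun z' => u z' t) z
  set Y := gradient (fun t' => u z t') t
  rw [real_inner_smul_right, real_inner_smul_right]
  have hρval : ρ z t = (A + B) ^ q := by rw [hρ]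
  have hρpos : 0 < ρ z t := by rw [hρval]; exact Real.rpow_pos_of_pos hF _
  have hkey : (A + B) ^ (q - 1) = 1 / (ρ z t * ρ z t ^ (2 * α)) := by
    have h0 : (α + 1) ≠ 0 := hα1.ne'
    rw [hρval, ← Real.rpow_mul hF.le, ← Real.rpow_add hF,
      eq_div_iff (Real.rpow_pos_of_pos hF _).ne', ← Real.rpow_add hF,
      show q - 1 + (q + q * (2 * α)) = 0 by rw [hq]; field_simp; ring, Real.rpow_zero]
  rw [hkey, real_inner_comm X z, real_inner_comm Y t]
  have hP : (0:ℝ) ≤ ‖z‖ ^ (2 * α) := Real.rpow_nonneg (norm_nonneg z) _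
  have hρ2α : 0 < ρ z t ^ (2 * α) := Real.rpow_pos_of_pos hρpos _
  field_simp
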